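/- Suppose that for the solution ({x_n},{y_n}) there exist constants M1, M2 > 0 such that M1·y_n ≤ x_n ≤ M2·y_n for all n ∈ ℕ. Suppose further that q > 0 and that there exists a positive integer η such that for every sequence {c_m}_{m=1}^∞ with c_m ∈ I_δ ∪ I_ε for all m, there exist positive integers N1 ≤ N2 ≤ η with Σ_{m=N1}^{N2} c_m ∈ I_D ∪ I_E. Then there exist M > 0 and N ∈ ℕ such that x_n ≤ M and y_n ≤ M for all n > N. -/

import Mathlib

open Finset

/-- The index set of the coefficient function `f` on `{1, …, k}`:
the set of indices `i ∈ {1, …, k}` with `f i > 0`. -/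
noncomputable def indexSet (k : ℕ) (f : ℕ → ℝ) : Finset ℕ :=
  (Finset.Icc 1 k).filter fun i => 0 < f i

/-- The iteration condition: for every sequence `c` (indexed by `1, 2, …`)
taking values in `S`, there exist positive integers `N1 ≤ N2 ≤ η` such that
`∑_{m=N1}^{N2} c m ∈ T`. -/
def iterCond (η : ℕ) (S T : Finset ℕ) : Prop :=
  ∀ c : ℕ → ℕ, (∀ m, 1 ≤ m → c m ∈ S) →
    ∃ N1 N2 : ℕ, 0 < N1 ∧ N1 ≤ N2 ∧ N2 ≤ η ∧ (∑ m ∈ Finset.Icc N1 N2, c m) ∈ T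

set_option maxHeartbeats 1000000 in
theorem stmt_1
    (k : ℕ) (hk : 0 < k)
    (α A p q : ℝ) (β γ B C δ ε D E : ℕ → ℝ)
    (hα : 0 ≤ α) (hA : 0 ≤ A) (hp : 0 ≤ p) (hq : 0 ≤ q)
    (hβ : ∀ i, 0 ≤ β i) (hγ : ∀ i, 0 ≤ γ i) (hB : ∀ j, 0 ≤ B j) (hC : ∀ j, 0 ≤ C j)
    (hδ : ∀ i, 0 ≤ δ i) (hε : ∀ i, 0 ≤ ε i) (hD : ∀ j, 0 ≤ D j) (hE : ∀ j, 0 ≤ E j)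
    (x y : ℕ → ℝ)
    (hxnn : ∀ n, 0 ≤ x n) (hynn : ∀ n, 0 ≤ y n)
    (hxden : ∀ n, k ≤ n →
      0 < A + ∑ j ∈ Icc 1 k, B j * x (n - j) + ∑ j ∈ Icc 1 k, C j * y (n - j))
    (hyden : ∀ n, k ≤ n →
      0 < q + ∑ j ∈ Icc 1 k, D j * x (n - j) + ∑ j ∈ Icc 1 k, E j * y (n - j))
    (hxrec : ∀ n, k ≤ n → x n =
      (α + ∑ i ∈ Icc 1 k, β i * x (n - i) + ∑ i ∈ Icc 1 k, γ i * y (n - i)) /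
      (A + ∑ j ∈ Icc 1 k, B j * x (n - j) + ∑ j ∈ Icc 1 k, C j * y (n - j)))
    (hyrec : ∀ n, k ≤ n → y n =
      (p + ∑ i ∈ Icc 1 k, δ i * x (n - i) + ∑ i ∈ Icc 1 k, ε i * y (n - i)) /
      (q + ∑ j ∈ Icc 1 k, D j * x (n - j) + ∑ j ∈ Icc 1 k, E j * y (n - j)))
    (M1 M2 : ℝ) (hM1 : 0 < M1) (hM2 : 0 < M2)
    (hcmp : ∀ n, M1 * y n ≤ x n ∧ x n ≤ M2 * y n)
    (hqpos : 0 < q)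
    (hη : ∃ η : ℕ, 0 < η ∧
      iterCond η (indexSet k δ ∪ indexSet k ε) (indexSet k D ∪ indexSet k E)) :
    ∃ M : ℝ, 0 < M ∧ ∃ N : ℕ, ∀ n, N < n → x n ≤ M ∧ y n ≤ M := by
  obtain ⟨η, hηpos, hiter⟩ := hη
  set φ : ℕ → ℝ := fun i => δ i * M2 + ε i with hφdef
  set ψ : ℕ → ℝ := fun j => D j * M1 + E j with hψdef
  have hφnn : ∀ i, 0 ≤ φ i := by
    intro i; simp only [hφdef]
    nlinarith [hδ i, hε i, hM2]
  have hψnn : ∀ j, 0 ≤ ψ j := by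
    intro j; simp only [hψdef]
    nlinarith [hD j, hE j, hM1]
  -- key inequality
  have keyA : ∀ n, k ≤ n →
      y n * (q + ∑ j ∈ Icc 1 k, ψ j * y (n - j)) ≤ p + ∑ i ∈ Icc 1 k, φ i * y (n - i) := by
    intro n hn
    have hd := hyden n hn
    have hyd : y n * (q + ∑ j ∈ Icc 1 k, D j * x (n - j) + ∑ j ∈ Icc 1 k, E j * y (n - j)) =
        p + ∑ i ∈ Icc 1 k, δ i * x (n - i) + ∑ i ∈ Icc 1 k, ε i * y (n - i) := by
      rw [hyrec n hn, div_mul_cancel₀]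
      exact hd.ne'
    have h1 : ∑ j ∈ Icc 1 k, ψ j * y (n - j) ≤
        (∑ j ∈ Icc 1 k, D j * x (n - j)) + ∑ j ∈ Icc 1 k, E j * y (n - j) := by
      rw [← Finset.sum_add_distrib]
      refine Finset.sum_le_sum fun j _ => ?_
      have h := (hcmp (n - j)).1
      have h4 := mul_le_mul_of_nonneg_left h (hD j)
      simp only [hψdef]
      nlinarith [hynn (n - j)]
    have h2 : (∑ i ∈ Icc 1 k, δ i * x (n - i)) + ∑ i ∈ Icc 1 k, ε i * y (n - i) ≤
        ∑ i ∈ Icc 1 k, φ i * y (n - i) := by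
      rw [← Finset.sum_add_distrib]
      refine Finset.sum_le_sum fun i _ => ?_
      have h := (hcmp (n - i)).2
      have h4 := mul_le_mul_of_nonneg_left h (hδ i)
      simp only [hφdef]
      nlinarith [hynn (n - i)]
    have h3 : y n * (q + ∑ j ∈ Icc 1 k, ψ j * y (n - j)) ≤
        y n * (q + ∑ j ∈ Icc 1 k, D j * x (n - j) + ∑ j ∈ Icc 1 k, E j * y (n - j)) := by
      apply mul_le_mul_of_nonneg_left _ (hynn n)
      linarith
    rw [hyd] at h3
    linarith
  have keyB : ∀ n, k ≤ n → q * y n ≤ p + ∑ i ∈ Icc 1 k, φ i * y (n - i) := by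
    intro n hn
    have h := keyA n hn
    have hs : 0 ≤ ∑ j ∈ Icc 1 k, ψ j * y (n - j) :=
      Finset.sum_nonneg fun j _ => mul_nonneg (hψnn j) (hynn _)
    nlinarith [mul_nonneg (hynn n) hs]
  -- characterizations of the index sets
  have hSmem : ∀ i, i ∈ indexSet k δ ∪ indexSet k ε ↔ (i ∈ Icc 1 k ∧ 0 < φ i) := by
    intro i
    simp only [Finset.mem_union, indexSet, Finset.mem_filter, hφdef]
    constructor
    · rintro (⟨h1, h2⟩ | ⟨h1, h2⟩)
      · exact ⟨h1, by nlinarith [hε i]⟩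
      · exact ⟨h1, by nlinarith [hδ i, hM2]⟩
    · rintro ⟨h1, h2⟩
      rcases lt_or_ge 0 (δ i) with h | h
      · exact Or.inl ⟨h1, h⟩
      · refine Or.inr ⟨h1, ?_⟩
        have hδ0 : δ i = 0 := le_antisymm h (hδ i)
        nlinarith
  have hTmem : ∀ i, i ∈ indexSet k D ∪ indexSet k E ↔ (i ∈ Icc 1 k ∧ 0 < ψ i) := by
    intro i
    simp only [Finset.mem_union, indexSet, Finset.mem_filter, hψdef]
    constructor
    · rintro (⟨h1, h2⟩ | ⟨h1, h2⟩)
      · exact ⟨h1, by nlinarith [hE i]⟩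
      · exact ⟨h1, by nlinarith [hD i, hM1]⟩
    · rintro ⟨h1, h2⟩
      rcases lt_or_ge 0 (D i) with h | h
      · exact Or.inl ⟨h1, h⟩
      · refine Or.inr ⟨h1, ?_⟩
        have hD0 : D i = 0 := le_antisymm h (hD i)
        nlinarith
  rcases (indexSet k δ ∪ indexSet k ε).eq_empty_or_nonempty with hSe | hSne
  · -- trivial case: numerator of y has no positive coefficients
    have hφ0 : ∀ i ∈ Icc 1 k, φ i = 0 := by
      intro i hi
      by_contra h
      have h2 : 0 < φ i := lt_of_le_of_ne (hφnn i) (Ne.symm h)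
      have h3 : i ∈ indexSet k δ ∪ indexSet k ε := (hSmem i).2 ⟨hi, h2⟩
      rw [hSe] at h3
      exact absurd h3 (Finset.notMem_empty i)
    have hyb : ∀ n, k ≤ n → y n ≤ p / q := by
      intro n hn
      have h := keyB n hn
      have h0 : ∑ i ∈ Icc 1 k, φ i * y (n - i) = 0 :=
        Finset.sum_eq_zero fun i hi => by rw [hφ0 i hi, zero_mul]
      rw [le_div_iff₀ hqpos]
      nlinarith
    have hpq : 0 ≤ p / q := div_nonneg hp hq
    refine ⟨M2 * (p / q) + p / q + 1, by positivity, k, fun n hn => ?_⟩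
    have hy := hyb n hn.le
    have h1 := mul_le_mul_of_nonneg_left hy hM2.le
    constructor
    · nlinarith [(hcmp n).2]
    · nlinarith
  · -- main case
    obtain ⟨s₀, hs₀⟩ := hSne
    obtain ⟨hs₀I, hs₀φ⟩ := (hSmem s₀).1 hs₀
    have hT : (indexSet k D ∪ indexSet k E).Nonempty := by
      obtain ⟨N1, N2, _, _, _, hd⟩ := hiter (fun _ => s₀) (fun m _ => hs₀)
      exact ⟨_, hd⟩
    set Φs := ∑ i ∈ Icc 1 k, φ i with hΦdef
    have hΦpos : 0 < Φs :=
      Finset.sum_pos' (fun i _ => hφnn i) ⟨s₀, hs₀I, hs₀φ⟩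
    set ψm := (indexSet k D ∪ indexSet k E).inf' hT ψ with hψmdef
    have hψmpos : 0 < ψm := by
      rw [hψmdef, Finset.lt_inf'_iff]
      intro b hb
      exact ((hTmem b).1 hb).2
    have hψmle : ∀ d ∈ indexSet k D ∪ indexSet k E, ψm ≤ ψ d :=
      fun d hd => Finset.inf'_le ψ hd
    have hkR : (0:ℝ) < (k:ℝ) := Nat.cast_pos.2 hk
    set a := q / ((k:ℝ) * Φs) with hadef
    set b' := p / ((k:ℝ) * Φs) with hbdef
    have hapos : 0 < a := div_pos hqpos (by positivity)
    have hbnn : 0 ≤ b' := div_nonneg hp (by positivity)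
    -- one step of the chain
    have step : ∀ n, k ≤ n → p < q * y n →
        ∃ i ∈ Icc 1 k, 0 < φ i ∧ a * y n - b' ≤ y (n - i) := by
      intro n hn hpy
      have hkey := keyB n hn
      have hcard : (Icc 1 k).card = k := by rw [Nat.card_Icc]; omega
      have hne : (Icc 1 k).Nonempty := ⟨1, by rw [Finset.mem_Icc]; omega⟩
      have hsum : ∑ _i ∈ Icc 1 k, (q * y n - p) / (k:ℝ) = q * y n - p := by
        rw [Finset.sum_const, hcard, nsmul_eq_mul]
        field_simp
      have hsle : ∑ _i ∈ Icc 1 k, (q * y n - p) / (k:ℝ) ≤ ∑ i ∈ Icc 1 k, φ i * y (n - i) := by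
        rw [hsum]; linarith
      obtain ⟨i, hi, hile⟩ := Finset.exists_le_of_sum_le hne hsle
      have hqp : 0 < (q * y n - p) / (k:ℝ) := div_pos (by linarith) hkR
      have hφipos : 0 < φ i := by
        by_contra h
        push_neg at h
        have h0 : φ i = 0 := le_antisymm h (hφnn i)
        rw [h0, zero_mul] at hile
        linarith
      refine ⟨i, hi, hφipos, ?_⟩
      have hφile : φ i ≤ Φs := by
        have h1 := Finset.single_le_sum (f := φ) (fun j _ => hφnn j) hi
        rw [← hΦdef] at h1
        exact h1
      rw [div_le_iff₀ hkR] at hile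
      have h6 : (k:ℝ) * (φ i * y (n - i)) ≤ (k:ℝ) * (Φs * y (n - i)) := by
        have h7 := mul_le_mul_of_nonneg_right hφile (hynn (n - i))
        nlinarith
      rw [hadef, hbdef, div_mul_eq_mul_div, div_sub_div_same, div_le_iff₀ (by positivity)]
      nlinarith
    -- constants for the lower bound on chain values
    obtain ⟨e, f, hepos, hele1, hfnn, hGef⟩ :
        ∃ e f : ℝ, 0 < e ∧ e ≤ 1 ∧ 0 ≤ f ∧
          ∀ j, j ≤ η → (e ≤ a ^ j ∧ b' * ∑ i ∈ Finset.range j, a ^ i ≤ f) := by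
      have hm0 : 0 < min a 1 := lt_min hapos one_pos
      have hmax1 : (1:ℝ) ≤ max a 1 := le_max_right a 1
      have hmaxnn : (0:ℝ) ≤ max a 1 := le_trans zero_le_one hmax1
      refine ⟨(min a 1) ^ η, b' * η * (max a 1) ^ η, pow_pos hm0 η, ?_, ?_, ?_⟩
      · calc (min a 1) ^ η ≤ 1 ^ η := pow_le_pow_left₀ hm0.le (min_le_right a 1) η
          _ = 1 := one_pow η
      · exact mul_nonneg (mul_nonneg hbnn (Nat.cast_nonneg η)) (pow_nonneg hmaxnn η)
      · intro j hj
        constructor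
        · calc (min a 1) ^ η ≤ (min a 1) ^ j := pow_le_pow_of_le_one hm0.le (min_le_right a 1) hj
            _ ≤ a ^ j := pow_le_pow_left₀ hm0.le (min_le_left a 1) j
        · have hbound : ∀ i ∈ Finset.range j, a ^ i ≤ (max a 1) ^ η := by
            intro i hi
            calc a ^ i ≤ (max a 1) ^ i := pow_le_pow_left₀ hapos.le (le_max_left a 1) i
              _ ≤ (max a 1) ^ η :=
                pow_le_pow_right₀ hmax1 (le_trans (Finset.mem_range.1 hi).le hj)
          have h1 := Finset.sum_le_card_nsmul (Finset.range j) _ _ hbound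
          rw [Finset.card_range, nsmul_eq_mul] at h1
          have h3 : (j:ℝ) ≤ (η:ℝ) := Nat.cast_le.2 hj
          have h4 : (0:ℝ) ≤ (max a 1) ^ η := pow_nonneg hmaxnn η
          nlinarith [mul_le_mul_of_nonneg_left h1 hbnn,
            mul_nonneg (mul_nonneg (sub_nonneg.2 h3) hbnn) h4]
    -- the threshold Z
    obtain ⟨Z, hZ1, hqZ, hψmZ⟩ :
        ∃ Z : ℝ, 1 ≤ Z ∧ p < q * Z ∧ e * p + Φs + Φs * f + 1 ≤ e * ψm * Z := by
      have hw : 0 < e * p + Φs + Φs * f + 1 := by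
        nlinarith [mul_nonneg hepos.le hp, mul_nonneg hΦpos.le hfnn]
      have heψ : 0 < e * ψm := mul_pos hepos hψmpos
      refine ⟨1 + p / q + (e * p + Φs + Φs * f + 1) / (e * ψm), ?_, ?_, ?_⟩
      · have h1 := div_nonneg hp hq
        have h2 := div_nonneg hw.le heψ.le
        linarith
      · have h1 : q * (p / q) = p := by field_simp
        have h2 : 0 ≤ q * ((e * p + Φs + Φs * f + 1) / (e * ψm)) :=
          mul_nonneg hq (div_nonneg hw.le heψ.le)
        nlinarith
      · have h1 : e * ψm * ((e * p + Φs + Φs * f + 1) / (e * ψm)) =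
            e * p + Φs + Φs * f + 1 := by field_simp
        have h2 : 0 ≤ e * ψm * (1 + p / q) := by
          have := div_nonneg hp hq
          exact mul_nonneg heψ.le (by linarith)
        nlinarith
    -- the bound M
    have hrange : (Finset.range (k + k * η)).Nonempty :=
      ⟨0, Finset.mem_range.2 (by positivity)⟩
    obtain ⟨M, hMC0, hMZ⟩ :
        ∃ M : ℝ, (∀ m, m < k + k * η → y m ≤ M) ∧ Z + f ≤ e * M := by
      set C0 := (Finset.range (k + k * η)).sup' hrange y with hC0def
      refine ⟨max C0 ((Z + f) / e), fun m hm => ?_, ?_⟩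
      · exact le_trans (Finset.le_sup' y (Finset.mem_range.2 hm)) (le_max_left _ _)
      · have h1 : (Z + f) / e ≤ max C0 ((Z + f) / e) := le_max_right _ _
        rw [div_le_iff₀ hepos] at h1
        linarith
    have hMpos : 0 < M := by
      by_contra h
      push_neg at h
      have h1 : e * M ≤ 0 := mul_nonpos_of_nonneg_of_nonpos hepos.le h
      linarith
    set Zm := e * M - f with hZmdef
    have hZZm : Z ≤ Zm := by rw [hZmdef]; linarith
    have hZm1 : 1 ≤ Zm := le_trans hZ1 hZZm
    have hZm0 : 0 ≤ Zm := by linarith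
    have hqZm : p < q * Zm := lt_of_lt_of_le hqZ (mul_le_mul_of_nonneg_left hZZm hq)
    -- the chain lower-bound function
    set G := fun j : ℕ => a ^ j * M - b' * ∑ i ∈ Finset.range j, a ^ i with hGdef
    have hG0 : G 0 = M := by simp [hGdef]
    have hGstep : ∀ m : ℕ, a * G m - b' = G (m + 1) := by
      intro m
      simp only [hGdef]
      rw [geom_sum_succ]
      ring
    have hZmG : ∀ j, j ≤ η → Zm ≤ G j := by
      intro j hj
      obtain ⟨h1, h2⟩ := hGef j hj
      simp only [hGdef]
      rw [hZmdef]
      nlinarith [mul_le_mul_of_nonneg_right h1 hMpos.le]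
    -- the main numeric inequality
    have hmain : p + Φs * M < Zm * (q + ψm * Zm) := by
      have hΦM : Φs * (e * M) = Φs * Zm + Φs * f := by rw [hZmdef]; ring
      have key : e * (p + Φs * M) < e * (Zm * (q + ψm * Zm)) := by
        nlinarith [hΦM, hψmZ, hZm1, hZZm, hZm0, hepos.le, hq, hp, hψmpos.le, hΦpos.le, hfnn,
          mul_nonneg (mul_nonneg hepos.le hq) hZm0,
          mul_nonneg (sub_nonneg.2 hZZm) (mul_nonneg (mul_nonneg hepos.le hψmpos.le) hZm0),
          mul_nonneg (sub_nonneg.2 hψmZ) hZm0,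
          mul_nonneg (sub_nonneg.2 hZm1) (mul_nonneg hepos.le hp),
          mul_nonneg (sub_nonneg.2 hZm1) (mul_nonneg hΦpos.le hfnn)]
      exact lt_of_mul_lt_mul_left key hepos.le
    -- y is bounded by M everywhere
    have hyb : ∀ n, y n ≤ M := by
      intro n
      induction n using Nat.strong_induction_on with
      | _ n ih =>
        rcases lt_or_ge n (k + k * η) with hn | hn
        · exact hMC0 n hn
        · by_contra hcon
          push_neg at hcon
          have hkn : k ≤ n := le_trans (Nat.le_add_right k (k * η)) hn
          -- build the chain
          have chain : ∀ m, m ≤ η → ∃ c : ℕ → ℕ,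
              (∀ j, 1 ≤ j → c j ∈ indexSet k δ ∪ indexSet k ε) ∧
              ∀ j, j ≤ m →
                (∑ i ∈ Icc 1 j, c i) ≤ k * j ∧ G j ≤ y (n - ∑ i ∈ Icc 1 j, c i) := by
            intro m
            induction m with
            | zero =>
              intro _
              refine ⟨fun _ => s₀, fun j _ => hs₀, fun j hj => ?_⟩
              have hj0 : j = 0 := Nat.le_zero.1 hj
              subst hj0
              have hI : Icc 1 0 = (∅ : Finset ℕ) := Finset.Icc_eq_empty (by omega)
              rw [hI, Finset.sum_empty]
              exact ⟨Nat.zero_le _, by rw [Nat.sub_zero, hG0]; exact hcon.le⟩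
            | succ m ihm =>
              intro hm1
              obtain ⟨c, hcS, hcP⟩ := ihm (le_trans (Nat.le_succ m) hm1)
              have hmη : m ≤ η := le_trans (Nat.le_succ m) hm1
              obtain ⟨ht, hGy⟩ := hcP m le_rfl
              have htk : (∑ i ∈ Icc 1 m, c i) ≤ k * η :=
                le_trans ht (Nat.mul_le_mul le_rfl hmη)
              have hnt : k ≤ n - ∑ i ∈ Icc 1 m, c i :=
                Nat.le_sub_of_add_le (le_trans (add_le_add_right htk k) hn)
              have hqy : p < q * y (n - ∑ i ∈ Icc 1 m, c i) := by
                have h2 : Zm ≤ y (n - ∑ i ∈ Icc 1 m, c i) := le_trans (hZmG m hmη) hGy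
                nlinarith [mul_le_mul_of_nonneg_left h2 hq]
              obtain ⟨i, hi, hφi, hstep⟩ := step _ hnt hqy
              refine ⟨fun j => if j = m + 1 then i else c j, ?_, ?_⟩
              · intro j hj
                by_cases hjm : j = m + 1
                · simp only [if_pos hjm]
                  exact (hSmem i).2 ⟨hi, hφi⟩
                · simpa [hjm] using hcS j hj
              · intro j hj
                by_cases hjm : j ≤ m
                · have hsum_eq : ∑ i' ∈ Icc 1 j, (if i' = m + 1 then i else c i') =
                      ∑ i' ∈ Icc 1 j, c i' := by
                    refine Finset.sum_congr rfl fun z hz => ?_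
                    have hz2 : z ≤ j := (Finset.mem_Icc.1 hz).2
                    rw [if_neg (by omega)]
                  rw [hsum_eq]
                  exact hcP j hjm
                · have hj' : j = m + 1 := by omega
                  subst hj'
                  have hsum : ∑ i' ∈ Icc 1 (m + 1), (if i' = m + 1 then i else c i') =
                      (∑ i' ∈ Icc 1 m, c i') + i := by
                    rw [Finset.sum_Icc_succ_top (by omega)]
                    simp only [if_pos rfl]
                    congr 1
                    refine Finset.sum_congr rfl fun z hz => ?_
                    have hz2 : z ≤ m := (Finset.mem_Icc.1 hz).2
                    rw [if_neg (by omega)]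
                  rw [hsum]
                  have hik : i ≤ k := (Finset.mem_Icc.1 hi).2
                  constructor
                  · rw [Nat.mul_succ]
                    exact Nat.add_le_add ht hik
                  · have hidx : n - ((∑ i' ∈ Icc 1 m, c i') + i) =
                        (n - ∑ i' ∈ Icc 1 m, c i') - i := by omega
                    rw [hidx, ← hGstep m]
                    nlinarith [mul_le_mul_of_nonneg_left hGy hapos.le]
          obtain ⟨c, hcS, hcP⟩ := chain η le_rfl
          obtain ⟨N1, N2, hN1, hN12, hN2, hdT⟩ := hiter c hcS
          set t1 := ∑ i ∈ Icc 1 (N1 - 1), c i with ht1def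
          set t2 := ∑ i ∈ Icc 1 N2, c i with ht2def
          set d := ∑ m ∈ Icc N1 N2, c m with hddef
          have hsplit : t1 + d = t2 := by
            rw [ht1def, ht2def, hddef]
            have h1 : Icc 1 (N1 - 1) = Ico 1 N1 := by
              rw [← Finset.Ico_add_one_right_eq_Icc]
              congr 1
              omega
            have h2 : Icc N1 N2 = Ico N1 (N2 + 1) := (Finset.Ico_add_one_right_eq_Icc N1 N2).symm
            have h3 : Icc 1 N2 = Ico 1 (N2 + 1) := (Finset.Ico_add_one_right_eq_Icc 1 N2).symm
            rw [h1, h2, h3]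
            exact Finset.sum_Ico_consecutive c (by omega) (by omega)
          obtain ⟨hdk, hψd0⟩ := (hTmem d).1 hdT
          have hN11 : N1 - 1 ≤ η := by omega
          obtain ⟨ht1, hGy1⟩ := hcP (N1 - 1) hN11
          obtain ⟨ht2b, hGy2⟩ := hcP N2 hN2
          have ht1η : t1 ≤ k * η := le_trans ht1 (Nat.mul_le_mul le_rfl hN11)
          have hn1k : k ≤ n - t1 :=
            Nat.le_sub_of_add_le (le_trans (add_le_add_right ht1η k) hn)
          have hK := keyA (n - t1) hn1k
          have hsingle : ψ d * y (n - t1 - d) ≤ ∑ j ∈ Icc 1 k, ψ j * y (n - t1 - j) :=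
            Finset.single_le_sum (f := fun j => ψ j * y (n - t1 - j))
              (fun j _ => mul_nonneg (hψnn j) (hynn _)) hdk
          have hidx2 : n - t1 - d = n - t2 := by omega
          have hpast : ∀ j ∈ Icc 1 k, y (n - t1 - j) ≤ M := by
            intro j hj
            apply ih
            have hj1 : 1 ≤ j := (Finset.mem_Icc.1 hj).1
            omega
          have hup : ∑ j ∈ Icc 1 k, φ j * y (n - t1 - j) ≤ Φs * M := by
            calc ∑ j ∈ Icc 1 k, φ j * y (n - t1 - j)
                ≤ ∑ j ∈ Icc 1 k, φ j * M :=
                  Finset.sum_le_sum fun j hj =>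
                    mul_le_mul_of_nonneg_left (hpast j hj) (hφnn j)
              _ = Φs * M := by rw [hΦdef, Finset.sum_mul]
          have hy1 : Zm ≤ y (n - t1) := le_trans (hZmG _ hN11) hGy1
          have hy2 : Zm ≤ y (n - t1 - d) := by
            rw [hidx2]
            exact le_trans (hZmG N2 hN2) hGy2
          have hψd : ψm ≤ ψ d := hψmle _ hdT
          have hlhs : Zm * (q + ψm * Zm) ≤ y (n - t1) * (q + ψ d * y (n - t1 - d)) := by
            have h5 : ψm * Zm ≤ ψ d * y (n - t1 - d) :=
              mul_le_mul hψd hy2 hZm0 hψd0.le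
            have h6 : 0 ≤ q + ψm * Zm := add_nonneg hq (mul_nonneg hψmpos.le hZm0)
            calc Zm * (q + ψm * Zm) ≤ y (n - t1) * (q + ψm * Zm) :=
                  mul_le_mul_of_nonneg_right hy1 h6
              _ ≤ y (n - t1) * (q + ψ d * y (n - t1 - d)) :=
                  mul_le_mul_of_nonneg_left (by linarith) (hynn _)
          have hrhs : y (n - t1) * (q + ψ d * y (n - t1 - d)) ≤ p + Φs * M := by
            have h7 : q + ψ d * y (n - t1 - d) ≤ q + ∑ j ∈ Icc 1 k, ψ j * y (n - t1 - j) := by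
              linarith
            calc y (n - t1) * (q + ψ d * y (n - t1 - d))
                ≤ y (n - t1) * (q + ∑ j ∈ Icc 1 k, ψ j * y (n - t1 - j)) :=
                  mul_le_mul_of_nonneg_left h7 (hynn _)
              _ ≤ p + ∑ i ∈ Icc 1 k, φ i * y (n - t1 - i) := hK
              _ ≤ p + Φs * M := by linarith
          linarith
    refine ⟨M2 * M + M + 1, by nlinarith, 0, fun n _ => ?_⟩
    constructor
    · nlinarith [(hcmp n).2, hyb n, mul_le_mul_of_nonneg_left (hyb n) hM2.le]
    · nlinarith [hyb n, mul_nonneg hM2.le hMpos.le]
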